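/- For a simple connected graph G on n ≥ 2 vertices, the largest normalized Laplacian eigenvalue satisfies λ_1 ≥ 1 + √((2/(n(n-1)))·∑_{(i,j)∈E} 1/(d_i d_j)). -/

import Mathlib

open Matrix Finset

/-- The normalized Laplacian `D^{-1/2} (D - A) D^{-1/2}` of a simple graph. -/
noncomputable def normLap {n : ℕ} (G : SimpleGraph (Fin n)) [DecidableRel G.Adj] :
    Matrix (Fin n) (Fin n) ℝ :=
  let Dinvhalf : Matrix (Fin n) (Fin n) ℝ :=
    Matrix.diagonal fun i => (Real.sqrt (G.degree i))⁻¹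
  Dinvhalf * (Matrix.diagonal (fun i => (G.degree i : ℝ)) - G.adjMatrix ℝ) * Dinvhalf

/-- The sum over the edges of `G` of `1/(d_i d_j)`, written as half the sum over
ordered adjacent pairs. -/
noncomputable def edgeDegSum {n : ℕ} (G : SimpleGraph (Fin n)) [DecidableRel G.Adj] : ℝ :=
  (1 / 2) * ∑ i, ∑ j, if G.Adj i j then 1 / ((G.degree i : ℝ) * (G.degree j : ℝ)) else 0

lemma normLap_apply {n : ℕ} (G : SimpleGraph (Fin n)) [DecidableRel G.Adj] (i j : Fin n) :
    normLap G i j = (Real.sqrt (G.degree i))⁻¹ *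
      ((if i = j then (G.degree i : ℝ) else 0) - (if G.Adj i j then 1 else 0)) *
      (Real.sqrt (G.degree j))⁻¹ := by
  simp [normLap, mul_apply, Matrix.sub_apply, diagonal_apply, Finset.mul_sum, Finset.sum_mul,
    ite_mul, mul_ite]

lemma normLap_diag {n : ℕ} (G : SimpleGraph (Fin n)) [DecidableRel G.Adj] (i : Fin n)
    (hd : 0 < G.degree i) : normLap G i i = 1 := by
  rw [normLap_apply]
  have h0 : (0:ℝ) < (G.degree i : ℝ) := by exact_mod_cast hd
  rw [if_pos rfl, if_neg (G.irrefl), sub_zero]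
  rw [mul_comm, ← mul_assoc, ← mul_inv, Real.mul_self_sqrt h0.le]
  field_simp

lemma normLap_prod {n : ℕ} (G : SimpleGraph (Fin n)) [DecidableRel G.Adj] (i j : Fin n)
    (hdi : 0 < G.degree i) (hdj : 0 < G.degree j) :
    normLap G i j * normLap G j i =
      (if i = j then 1 else 0) +
        (if G.Adj i j then ((G.degree i : ℝ) * (G.degree j : ℝ))⁻¹ else 0) := by
  by_cases h : i = j
  · subst h
    rw [normLap_diag G i hdi, if_pos rfl, if_neg (G.irrefl)]
    norm_num
  · have h' : ¬ j = i := fun hh => h hh.symm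
    rw [if_neg h, normLap_apply, normLap_apply, if_neg h, if_neg h']
    have h0 : (0:ℝ) < (G.degree i : ℝ) := by exact_mod_cast hdi
    have h1 : (0:ℝ) < (G.degree j : ℝ) := by exact_mod_cast hdj
    have si : Real.sqrt (G.degree i) * Real.sqrt (G.degree i) = (G.degree i : ℝ) :=
      Real.mul_self_sqrt h0.le
    have sj : Real.sqrt (G.degree j) * Real.sqrt (G.degree j) = (G.degree j : ℝ) :=
      Real.mul_self_sqrt h1.le
    by_cases ha : G.Adj i j
    · rw [if_pos ha, if_pos ha.symm]
      have key : (Real.sqrt (G.degree i))⁻¹ * ((0:ℝ) - 1) * (Real.sqrt (G.degree j))⁻¹ *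
          ((Real.sqrt (G.degree j))⁻¹ * ((0:ℝ) - 1) * (Real.sqrt (G.degree i))⁻¹) =
          (Real.sqrt (G.degree i) * Real.sqrt (G.degree i))⁻¹ *
            (Real.sqrt (G.degree j) * Real.sqrt (G.degree j))⁻¹ := by
        rw [mul_inv, mul_inv]; ring
      rw [key, si, sj, zero_add, mul_inv, if_pos ha]
    · rw [if_neg ha, if_neg (fun hh : G.Adj j i => ha hh.symm)]
      rw [if_neg ha]
      norm_num

lemma max_dev {n : ℕ} (hn : 2 ≤ n) (x : Fin n → ℝ) (hsum : ∑ i, x i = 0)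
    (hmax : ∀ i, x i ≤ x ⟨0, Nat.zero_lt_of_lt hn⟩) :
    ∑ i, (x i)^2 ≤ (n : ℝ) * ((n : ℝ) - 1) * (x ⟨0, Nat.zero_lt_of_lt hn⟩)^2 := by
  set M := x ⟨0, Nat.zero_lt_of_lt hn⟩ with hM
  set S := ∑ i, max (x i) 0 with hS
  set T := ∑ i, max (-(x i)) 0 with hT
  have hpt0 : ∀ i, max (x i) 0 - max (-(x i)) 0 = x i := by
    intro i
    rcases le_or_gt 0 (x i) with h | h
    · rw [max_eq_left h, max_eq_right (by linarith)]; ring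
    · rw [max_eq_right h.le, max_eq_left (by linarith)]; ring
  have hST : S = T := by
    have hd : ∑ i, (max (x i) 0 - max (-(x i)) 0) = ∑ i, x i :=
      Finset.sum_congr rfl fun i _ => hpt0 i
    rw [Finset.sum_sub_distrib, ← hS, ← hT, hsum] at hd
    linarith
  have hM0 : 0 ≤ M := by
    by_contra hc
    push_neg at hc
    have h1 : ∑ i, x i ≤ ∑ _i : Fin n, M := Finset.sum_le_sum fun i _ => hmax i
    have h2 : ∑ _i : Fin n, M = n * M := by simp [mul_comm]
    have h3 : (0:ℝ) < n := by positivity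
    rw [hsum, h2] at h1
    nlinarith
  have hS0 : 0 ≤ S := Finset.sum_nonneg fun i _ => le_max_right _ _
  have hneg_le : ∀ i, -(x i) ≤ S := by
    intro i
    rw [hST, hT]
    calc -(x i) ≤ max (-(x i)) 0 := le_max_left _ _
      _ ≤ ∑ j, max (-(x j)) 0 :=
          Finset.single_le_sum (f := fun j => max (-(x j)) 0)
            (fun j _ => le_max_right _ _) (Finset.mem_univ i)
  have hpt : ∀ i, (x i)^2 ≤ M * max (x i) 0 + S * max (-(x i)) 0 := by
    intro i
    rcases le_or_gt 0 (x i) with h | h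
    · rw [max_eq_left h, max_eq_right (by linarith)]
      have := hmax i
      nlinarith
    · rw [max_eq_right h.le, max_eq_left (by linarith)]
      have := hneg_le i
      nlinarith
  have hsum2 : ∑ i, (x i)^2 ≤ M * S + S * S := by
    calc ∑ i, (x i)^2 ≤ ∑ i, (M * max (x i) 0 + S * max (-(x i)) 0) :=
          Finset.sum_le_sum fun i _ => hpt i
      _ = M * S + S * T := by
          rw [Finset.sum_add_distrib, ← Finset.mul_sum, ← Finset.mul_sum, ← hS, ← hT]
      _ = M * S + S * S := by rw [← hST]
  have hSle : S ≤ ((n:ℝ) - 1) * M := by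
    have hn1 : (1:ℝ) ≤ (n:ℝ) - 1 := by
      have : (2:ℝ) ≤ n := by exact_mod_cast hn
      linarith
    by_cases hall : ∀ i, 0 ≤ x i
    · have hz : ∀ i ∈ Finset.univ, x i = 0 :=
        (Finset.sum_eq_zero_iff_of_nonneg (fun i _ => hall i)).mp hsum
      have hSz : S = 0 := by
        rw [hS]; exact Finset.sum_eq_zero fun i hi => by rw [hz i hi, max_self]
      rw [hSz]
      nlinarith
    · push_neg at hall
      obtain ⟨j, hj⟩ := hall
      have hSe : S = ∑ i ∈ Finset.univ.erase j, max (x i) 0 := by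
        rw [hS, ← Finset.add_sum_erase _ _ (Finset.mem_univ j), max_eq_right hj.le, zero_add]
      rw [hSe]
      calc ∑ i ∈ Finset.univ.erase j, max (x i) 0 ≤ ∑ _i ∈ Finset.univ.erase j, M :=
            Finset.sum_le_sum fun i _ => max_le (hmax i) hM0
        _ = ((n:ℝ) - 1) * M := by
            rw [Finset.sum_const, Finset.card_erase_of_mem (Finset.mem_univ j)]
            have h1n : (1:ℕ) ≤ n := by omega
            rw [Finset.card_univ, Fintype.card_fin, nsmul_eq_mul, Nat.cast_sub h1n]
            norm_num
  nlinarith [hsum2, hSle, hS0, hM0]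




lemma trace_eq_sum_eigs {n : ℕ} {A : Matrix (Fin n) (Fin n) ℝ} (hA : A.IsHermitian) :
    A.trace = ∑ i, hA.eigenvalues i := by
  conv_lhs => rw [hA.spectral_theorem, Unitary.conjStarAlgAut_apply]
  rw [trace_mul_cycle, Unitary.coe_star_mul_self, one_mul, trace_diagonal]
  simp

lemma trace_sq_eq_sum_sq {n : ℕ} {A : Matrix (Fin n) (Fin n) ℝ} (hA : A.IsHermitian) :
    (A * A).trace = ∑ i, (hA.eigenvalues i)^2 := by
  set U : Matrix (Fin n) (Fin n) ℝ := (hA.eigenvectorUnitary : Matrix (Fin n) (Fin n) ℝ) with hU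
  have h1 : star U * U = 1 := Unitary.coe_star_mul_self _
  have h2 : ∀ X : Matrix (Fin n) (Fin n) ℝ, star U * (U * X) = X := by
    intro X; rw [← mul_assoc, h1, one_mul]
  conv_lhs => rw [hA.spectral_theorem, Unitary.conjStarAlgAut_apply]
  simp only [mul_assoc, h2, ← hU]
  rw [← mul_assoc, ← mul_assoc, trace_mul_cycle, ← mul_assoc (star U) U, h1, one_mul,
    diagonal_mul_diagonal, trace_diagonal]
  simp [sq]


theorem lambda_one_ge_P {n : ℕ} (hn : 2 ≤ n) (G : SimpleGraph (Fin n)) [DecidableRel G.Adj]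
    (hG : G.Connected) (hH : (normLap G).IsHermitian)
    (lam : Fin n → ℝ) (hanti : Antitone lam)
    (hperm : ∃ σ : Equiv.Perm (Fin n), lam = hH.eigenvalues ∘ σ) :
    lam ⟨0, by omega⟩ ≥
      1 + Real.sqrt ((2 / ((n : ℝ) * ((n : ℝ) - 1))) * edgeDegSum G) := by
  -- degrees are positive
  have hdeg : ∀ i, 0 < G.degree i := by
    intro i
    rw [SimpleGraph.degree_pos_iff_exists_adj]
    obtain ⟨j, hj⟩ := Fintype.exists_ne_of_one_lt_card (by simp; omega) i
    obtain ⟨p⟩ := hG.preconnected i j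
    cases p with
    | nil => exact absurd rfl (Ne.symm hj)
    | cons h q => exact ⟨_, h⟩
  -- trace of L is n
  have htr : (normLap G).trace = (n : ℝ) := by
    rw [Matrix.trace]
    have : ∀ i ∈ Finset.univ, Matrix.diag (normLap G) i = 1 := fun i _ =>
      normLap_diag G i (hdeg i)
    rw [Finset.sum_congr rfl this]
    simp
  -- trace of L² is n + 2 * edgeDegSum
  have htr2 : (normLap G * normLap G).trace = (n : ℝ) + 2 * edgeDegSum G := by
    rw [Matrix.trace]
    have : ∀ i ∈ Finset.univ, Matrix.diag (normLap G * normLap G) i =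
        ∑ j, ((if i = j then (1:ℝ) else 0) +
          (if G.Adj i j then ((G.degree i : ℝ) * (G.degree j : ℝ))⁻¹ else 0)) := by
      intro i _
      rw [Matrix.diag_apply, Matrix.mul_apply]
      exact Finset.sum_congr rfl fun j _ => normLap_prod G i j (hdeg i) (hdeg j)
    rw [Finset.sum_congr rfl this]
    have expand : ∑ i : Fin n, ∑ j : Fin n, ((if i = j then (1:ℝ) else 0) +
          (if G.Adj i j then ((G.degree i : ℝ) * (G.degree j : ℝ))⁻¹ else 0)) =
        (∑ i : Fin n, ∑ j : Fin n, (if i = j then (1:ℝ) else 0)) +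
        ∑ i : Fin n, ∑ j : Fin n,
          (if G.Adj i j then ((G.degree i : ℝ) * (G.degree j : ℝ))⁻¹ else 0) := by
      rw [← Finset.sum_add_distrib]
      exact Finset.sum_congr rfl fun i _ => Finset.sum_add_distrib
    rw [expand]
    have h1 : ∑ i : Fin n, ∑ j : Fin n, (if i = j then (1:ℝ) else 0) = (n : ℝ) := by
      simp [Finset.sum_ite_eq]
    have h2 : ∑ i : Fin n, ∑ j : Fin n,
        (if G.Adj i j then ((G.degree i : ℝ) * (G.degree j : ℝ))⁻¹ else 0) =
        2 * edgeDegSum G := by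
      rw [edgeDegSum]
      rw [← mul_assoc]
      norm_num [one_div]
    rw [h1, h2]
  -- sums of lam and lam²
  obtain ⟨σ, hσ⟩ := hperm
  have hsum1 : ∑ i, lam i = (n : ℝ) := by
    rw [hσ]
    have := Equiv.sum_comp σ hH.eigenvalues
    simpa [Function.comp] using this.trans (trace_eq_sum_eigs hH).symm |>.trans htr
  have hsum2 : ∑ i, (lam i)^2 = (n : ℝ) + 2 * edgeDegSum G := by
    rw [hσ]
    have := Equiv.sum_comp σ (fun j => (hH.eigenvalues j)^2)
    simpa [Function.comp] using
      this.trans (trace_sq_eq_sum_sq hH).symm |>.trans htr2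
  -- apply the deviation lemma
  set x : Fin n → ℝ := fun i => lam i - 1 with hx
  have hxs : ∑ i, x i = 0 := by
    rw [hx]
    rw [Finset.sum_sub_distrib, hsum1]
    simp
  have hxmax : ∀ i, x i ≤ x ⟨0, by omega⟩ := by
    intro i
    have : (⟨0, by omega⟩ : Fin n) ≤ i := by
      simp [Fin.le_def]
    have := hanti this
    simp only [hx]
    linarith
  have hdev := max_dev hn x hxs hxmax
  have hxsq : ∑ i, (x i)^2 = 2 * edgeDegSum G := by
    have : ∀ i ∈ Finset.univ, (x i)^2 = (lam i)^2 - 2 * lam i + 1 := by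
      intro i _; rw [hx]; ring
    rw [Finset.sum_congr rfl this, Finset.sum_add_distrib, Finset.sum_sub_distrib,
      ← Finset.mul_sum, hsum1, hsum2]
    simp
    ring
  rw [hxsq] at hdev
  -- nonnegativity of the max deviation
  set M := x ⟨0, by omega⟩ with hM
  have hM0 : 0 ≤ M := by
    by_contra hc
    push_neg at hc
    have h1 : ∑ i, x i ≤ ∑ _i : Fin n, M := Finset.sum_le_sum fun i _ => hxmax i
    have h2 : ∑ _i : Fin n, M = n * M := by simp [mul_comm]
    have h3 : (0:ℝ) < n := by positivity
    rw [hxs, h2] at h1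
    nlinarith
  -- finish
  have hnpos : (0:ℝ) < (n : ℝ) * ((n : ℝ) - 1) := by
    have : (2:ℝ) ≤ (n:ℝ) := by exact_mod_cast hn
    nlinarith
  have harg : (2 / ((n : ℝ) * ((n : ℝ) - 1))) * edgeDegSum G =
      (2 * edgeDegSum G) / ((n : ℝ) * ((n : ℝ) - 1)) := by ring
  have hle : (2 * edgeDegSum G) / ((n : ℝ) * ((n : ℝ) - 1)) ≤ M^2 := by
    rw [div_le_iff₀ hnpos]
    nlinarith [hdev]
  have hsqrt : Real.sqrt ((2 / ((n : ℝ) * ((n : ℝ) - 1))) * edgeDegSum G) ≤ M := by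
    rw [harg]
    calc Real.sqrt ((2 * edgeDegSum G) / ((n : ℝ) * ((n : ℝ) - 1)))
        ≤ Real.sqrt (M^2) := Real.sqrt_le_sqrt hle
      _ = M := Real.sqrt_sq hM0
  have : M = lam ⟨0, by omega⟩ - 1 := by rw [hM, hx]
  linarith [hsqrt]
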